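/- Let A = [a_{ij}] be a Bott matrix of size n and let Γ(A) be the subgroup of bijections of ℝⁿ generated by the Euclidean motions s₁, …, s_n. Then the orbit space ℝⁿ/Γ(A), with the quotient topology, is compact. -/

import Mathlib

/-- The Euclidean motion `s_i : ℝⁿ → ℝⁿ` associated to a Bott matrix `A = [a_{ij}]`:
`(s_i x)_j = x_j` for `j < i`, `(s_i x)_i = x_i + 1/2`, and `(s_i x)_j = (-1)^{a_{ij}} x_j`
for `j > i`. -/
noncomputable def sA {n : ℕ} (A : Fin n → Fin n → ℕ) (i : Fin n) (x : Fin n → ℝ) :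
    Fin n → ℝ :=
  fun j => if j < i then x j else if j = i then x j + 1 / 2 else (-1 : ℝ) ^ (A i j) * x j

/-- `Γ(A)`, the subgroup of bijections of `ℝⁿ` generated by the Euclidean motions
`s₁, …, s_n` of a Bott matrix `A`. -/
noncomputable def GammaA {n : ℕ} (A : Fin n → Fin n → ℕ) : Subgroup (Equiv.Perm (Fin n → ℝ)) :=
  Subgroup.closure {σ : Equiv.Perm (Fin n → ℝ) | ∃ i : Fin n, ∀ x, σ x = sA A i x}

private lemma negpow_sq (a : ℕ) (t : ℝ) : (-1:ℝ)^a * ((-1:ℝ)^a * t) = t := by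
  rw [← mul_assoc, ← pow_add, ← two_mul, pow_mul]
  norm_num

/-- The Euclidean motion `s_i` as a permutation of `ℝⁿ`. -/
noncomputable def sigmaA {n : ℕ} (A : Fin n → Fin n → ℕ) (i : Fin n) :
    Equiv.Perm (Fin n → ℝ) where
  toFun := sA A i
  invFun := fun x j => if j < i then x j else if j = i then x j - 1 / 2
    else (-1 : ℝ) ^ (A i j) * x j
  left_inv := by
    intro x; funext j; unfold sA; by_cases h1 : j < i
    · simp [h1]
    · by_cases h2 : j = i
      · simp [h1, h2]
      · simp [h1, h2, negpow_sq]
  right_inv := by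
    intro x; funext j; unfold sA; by_cases h1 : j < i
    · simp [h1]
    · by_cases h2 : j = i
      · simp [h1, h2]
      · simp [h1, h2, negpow_sq]

lemma sigmaA_mem {n : ℕ} (A : Fin n → Fin n → ℕ) (i : Fin n) : sigmaA A i ∈ GammaA A :=
  Subgroup.subset_closure ⟨i, fun _ => rfl⟩

/-- The square of `s_i` is the translation by the `i`-th standard basis vector. -/
lemma sigmaA_sq {n : ℕ} (A : Fin n → Fin n → ℕ) (i : Fin n) (x : Fin n → ℝ) (j : Fin n) :
    ((sigmaA A i) ^ 2) x j = x j + (if j = i then (1:ℝ) else 0) := by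
  have : ((sigmaA A i) ^ 2) x = sigmaA A i (sigmaA A i x) := by
    rw [sq, Equiv.Perm.mul_apply]
  rw [this]
  show sA A i (sA A i x) j = _
  unfold sA
  by_cases h1 : j < i
  · simp [h1, h1.ne]
  · by_cases h2 : j = i
    · simp [h1, h2]; ring
    · simp [h1, h2, negpow_sq]

/-- Integer powers of a translation are translations. -/
lemma zpow_translate {n : ℕ} (g : Equiv.Perm (Fin n → ℝ)) (c : Fin n → ℝ)
    (h : ∀ x j, g x j = x j + c j) (k : ℤ) (x : Fin n → ℝ) (j : Fin n) :
    (g ^ k) x j = x j + (k : ℝ) * c j := by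
  have hinv : ∀ x : Fin n → ℝ, ∀ j, g⁻¹ x j = x j - c j := by
    intro x j
    have hgx : g (x - c) = x := by
      funext j'
      rw [h (x - c) j']
      simp
    calc g⁻¹ x j = g⁻¹ (g (x - c)) j := by rw [hgx]
      _ = (x - c) j := by rw [← Equiv.Perm.mul_apply, inv_mul_cancel, Equiv.Perm.one_apply]
      _ = x j - c j := by simp
  induction k using Int.induction_on generalizing x with
  | zero => simp
  | succ k ih =>
      rw [zpow_add_one, Equiv.Perm.mul_apply, ih, h]
      push_cast; ring
  | pred k ih =>
      rw [zpow_sub_one, Equiv.Perm.mul_apply, ih, hinv]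
      push_cast; ring

/-- A product of powers of the translations `s_i ^ 2` translates each coordinate
by the corresponding integer. -/
lemma list_translate {n : ℕ} (A : Fin n → Fin n → ℕ) (m : Fin n → ℤ)
    (l : List (Fin n)) (x : Fin n → ℝ) (j : Fin n) :
    ((l.map (fun i => ((sigmaA A i) ^ 2) ^ (m i))).prod) x j
      = x j + ((l.map (fun i => if j = i then (m i : ℝ) else 0)).sum) := by
  induction l generalizing x with
  | nil => simp
  | cons a t ih =>
      simp only [List.map_cons, List.prod_cons, List.sum_cons, Equiv.Perm.mul_apply]
      rw [zpow_translate ((sigmaA A a) ^ 2) (fun j => if j = a then (1:ℝ) else 0)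
        (fun x j => sigmaA_sq A a x j), ih]
      by_cases h1 : j = a <;> simp [h1] <;> ring

/-- Let `A = [a_{ij}]` be a Bott matrix of size `n` (strictly upper triangular with entries
in `{0,1}`) and let `Γ(A)` be the subgroup of bijections of `ℝⁿ` generated by the
Euclidean motions `s₁, …, s_n`.  Then the orbit space `ℝⁿ/Γ(A)`, with the quotient
topology, is compact. -/
theorem stmt9 {n : ℕ} (A : Fin n → Fin n → ℕ)
    (hA01 : ∀ i j, A i j ≤ 1) (hAupper : ∀ i j : Fin n, j ≤ i → A i j = 0) :
    CompactSpace (Quotient (MulAction.orbitRel (GammaA A) (Fin n → ℝ))) := by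
  constructor
  have hK : IsCompact (Set.Icc (0 : Fin n → ℝ) 1) := isCompact_Icc
  have hsurj : ∀ q : Quotient (MulAction.orbitRel (GammaA A) (Fin n → ℝ)),
      ∃ y ∈ Set.Icc (0 : Fin n → ℝ) 1, Quotient.mk _ y = q := by
    intro q
    induction q using Quotient.inductionOn with
    | h x =>
      set m : Fin n → ℤ := fun i => -⌊x i⌋ with hm
      set g : Equiv.Perm (Fin n → ℝ) :=
        ((List.finRange n).map (fun i => ((sigmaA A i) ^ 2) ^ (m i))).prod with hg
      have hgmem : g ∈ GammaA A := by
        apply Subgroup.list_prod_mem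
        intro σ hσ
        obtain ⟨i, _, rfl⟩ := List.mem_map.mp hσ
        exact Subgroup.zpow_mem _ (Subgroup.pow_mem _ (sigmaA_mem A i) 2) (m i)
      have hgx : ∀ j, g x j = Int.fract (x j) := by
        intro j
        rw [hg, list_translate]
        have hsum : ((List.finRange n).map
            (fun i => if j = i then (m i : ℝ) else 0)).sum = (m j : ℝ) := by
          rw [← List.ofFn_eq_map, List.sum_ofFn]
          simp
        rw [hsum, hm, Int.fract]
        push_cast
        ring
      refine ⟨g x, ?_, ?_⟩
      · constructor
        · intro j; rw [hgx j]; exact Int.fract_nonneg _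
        · intro j; rw [hgx j]; exact (Int.fract_lt_one _).le
      · apply Quotient.sound
        exact ⟨⟨g, hgmem⟩, rfl⟩
  have himg : (Set.univ : Set (Quotient (MulAction.orbitRel (GammaA A) (Fin n → ℝ))))
      = Quotient.mk _ '' Set.Icc (0 : Fin n → ℝ) 1 := by
    ext q
    simp only [Set.mem_univ, true_iff, Set.mem_image]
    obtain ⟨y, hy, hq⟩ := hsurj q
    exact ⟨y, hy, hq⟩
  rw [himg]
  exact hK.image continuous_quotient_mk'
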